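/- Let (X, Y) be a pair of random variables taking values in Z_2 × Z_2 and let Z = X ⊕ Y (addition modulo 2). Then for every R > H(Z) and every η > 0 there exists N such that for all n ≥ N there exist k ≥ 1 with k/n ≤ R, a matrix A ∈ M_{k×n}(Z_2) and a decoding map ψ : Z_2^k → Z_2^n such that, for (X^n, Y^n) consisting of n i.i.d. copies of (X, Y), the probability that ψ(A·X^n ⊕ A·Y^n) = X^n ⊕ Y^n is at least 1 − η. In particular, each encoder transmitting only its own syndrome (A·X^n, respectively A·Y^n) at rate at most R suffices for the decoder to recover the modulo-2 sum X^n ⊕ Y^n with high probability. -/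

import Mathlib

open scoped Classical

noncomputable section

/-- Base-2 Shannon entropy of a probability mass function on a finite type
(with the convention `0 · log 0 = 0`, automatic since `Real.logb 2 0 = 0`). -/
def ent {A : Type*} [Fintype A] (P : A → ℝ) : ℝ :=
  -∑ a, P a * Real.logb 2 (P a)

/-- Distribution (pushforward pmf) of a random variable `X` on a finite
probability space with weights `μ`. -/
def distOf {Ω A : Type*} [Fintype Ω] (μ : Ω → ℝ) (X : Ω → A) : A → ℝ :=
  fun a => ∑ ω, if X ω = a then μ ω else 0

/-- Entropy `H(X)` of a random variable `X` on a finite probability space. -/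
def Hent {Ω A : Type*} [Fintype Ω] [Fintype A] (μ : Ω → ℝ) (X : Ω → A) : ℝ :=
  ent (distOf μ X)

/-- Conditional entropy `H(X | Y) = H(X,Y) − H(Y)`. -/
def condEnt {Ω A B : Type*} [Fintype Ω] [Fintype A] [Fintype B]
    (μ : Ω → ℝ) (X : Ω → A) (Y : Ω → B) : ℝ :=
  Hent μ (fun ω => (X ω, Y ω)) - Hent μ Y

/-- The additive subgroup `p^i · Z_{p^r} = {p^i * x : x ∈ Z_{p^r}}` of `Z_{p^r}`. -/
def pZ (p r i : ℕ) : AddSubgroup (ZMod (p ^ r)) where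
  carrier := Set.range (fun x : ZMod (p ^ r) => (p : ZMod (p ^ r)) ^ i * x)
  add_mem' := by rintro a b ⟨x, rfl⟩ ⟨y, rfl⟩; exact ⟨x + y, by ring⟩
  zero_mem' := ⟨0, by ring⟩
  neg_mem' := by rintro a ⟨x, rfl⟩; exact ⟨-x, by ring⟩

instance {G : Type*} [AddGroup G] [Finite G] (H : AddSubgroup G) : Fintype (G ⧸ H) :=
  Fintype.ofFinite _

instance {G : Type*} [AddGroup G] [Finite G] (H : AddSubgroup G) : Fintype H :=
  Fintype.ofFinite _

/-- A sequence `x ∈ A^n` is strongly `ε`-typical for the pmf `Q` if each empirical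
frequency is within `ε` of `Q a`, and symbols of zero probability never occur. -/
def StronglyTypical {A : Type*} [Fintype A] {n : ℕ} (Q : A → ℝ)
    (x : Fin n → A) (ε : ℝ) : Prop :=
  ∀ a : A,
    |((Finset.univ.filter (fun j => x j = a)).card : ℝ) / n - Q a| ≤ ε ∧
    (Q a = 0 → (Finset.univ.filter (fun j => x j = a)).card = 0)


variable {B : Type*} [Fintype B]

lemma KM18.sum_prod_eq {n : ℕ} (h : Fin n → B → ℝ) :
    ∑ z : Fin n → B, ∏ j, h j (z j) = ∏ j, ∑ b, h j b :=
  (Fintype.prod_sum (fun j (b : B) => h j b)).symm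

lemma KM18.moment_one {n : ℕ} (Q g : B → ℝ) (hQ1 : ∑ b, Q b = 1) (i : Fin n) :
    ∑ z : Fin n → B, (∏ j, Q (z j)) * g (z i) = ∑ b, Q b * g b := by
  have key : ∀ z : Fin n → B, (∏ j, Q (z j)) * g (z i)
      = ∏ j, (Q (z j) * (if j = i then g (z j) else 1)) := by
    intro z
    rw [Finset.prod_mul_distrib]
    simp
  calc ∑ z : Fin n → B, (∏ j, Q (z j)) * g (z i)
      = ∑ z : Fin n → B, ∏ j, (Q (z j) * (if j = i then g (z j) else 1)) := by
        exact Finset.sum_congr rfl (fun z _ => key z)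
    _ = ∏ j, ∑ b, Q b * (if j = i then g b else 1) := KM18.sum_prod_eq (fun j b => Q b * (if j = i then g b else 1))
    _ = ∏ j : Fin n, (if j = i then ∑ b, Q b * g b else 1) := by
        refine Finset.prod_congr rfl (fun j _ => ?_)
        by_cases hj : j = i <;> simp [hj, hQ1]
    _ = ∑ b, Q b * g b := by simp

lemma KM18.moment_two {n : ℕ} (Q g : B → ℝ) (hQ1 : ∑ b, Q b = 1) {i i' : Fin n} (hne : i ≠ i') :
    ∑ z : Fin n → B, (∏ j, Q (z j)) * (g (z i) * g (z i'))
      = (∑ b, Q b * g b) * (∑ b, Q b * g b) := by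
  have key : ∀ z : Fin n → B, (∏ j, Q (z j)) * (g (z i) * g (z i'))
      = ∏ j, (Q (z j) * ((if j = i then g (z j) else 1) * (if j = i' then g (z j) else 1))) := by
    intro z
    rw [Finset.prod_mul_distrib, Finset.prod_mul_distrib]
    simp
  calc ∑ z : Fin n → B, (∏ j, Q (z j)) * (g (z i) * g (z i'))
      = ∑ z : Fin n → B, ∏ j,
          (Q (z j) * ((if j = i then g (z j) else 1) * (if j = i' then g (z j) else 1))) :=
        Finset.sum_congr rfl (fun z _ => key z)
    _ = ∏ j, ∑ b, Q b * ((if j = i then g b else 1) * (if j = i' then g b else 1)) :=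
        KM18.sum_prod_eq (fun j b => Q b * ((if j = i then g b else 1) * (if j = i' then g b else 1)))
    _ = ∏ j : Fin n, ((if j = i then ∑ b, Q b * g b else 1) * (if j = i' then ∑ b, Q b * g b else 1)) := by
        refine Finset.prod_congr rfl (fun j _ => ?_)
        by_cases hj : j = i
        · subst hj; simp [hne, hQ1]
        · have hne' : ¬ i' = i := fun h => hne h.symm
          by_cases hj' : j = i' <;> simp [hj, hj', hQ1, hne']
    _ = (∑ b, Q b * g b) * (∑ b, Q b * g b) := by
        rw [Finset.prod_mul_distrib]; simp

lemma KM18.second_moment {n : ℕ} (Q g : B → ℝ) (hQ1 : ∑ b, Q b = 1)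
    (hg : ∑ b, Q b * g b = 0) :
    ∑ z : Fin n → B, (∏ j, Q (z j)) * (∑ j, g (z j)) ^ 2
      = n * ∑ b, Q b * (g b * g b) := by
  have expand : ∀ z : Fin n → B, (∏ j, Q (z j)) * (∑ j, g (z j)) ^ 2
      = ∑ i : Fin n, ∑ i' : Fin n, (∏ j, Q (z j)) * (g (z i) * g (z i')) := by
    intro z
    rw [sq, Finset.sum_mul_sum]
    rw [Finset.mul_sum]
    refine Finset.sum_congr rfl (fun i _ => ?_)
    rw [Finset.mul_sum]
  rw [Finset.sum_congr rfl (fun z _ => expand z), Finset.sum_comm]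
  have : ∀ i : Fin n, ∑ z : Fin n → B, ∑ i' : Fin n, (∏ j, Q (z j)) * (g (z i) * g (z i'))
      = ∑ b, Q b * (g b * g b) := by
    intro i
    rw [Finset.sum_comm]
    have hterm : ∀ i' : Fin n, ∑ z : Fin n → B, (∏ j, Q (z j)) * (g (z i) * g (z i'))
        = if i = i' then ∑ b, Q b * (g b * g b) else 0 := by
      intro i'
      by_cases h : i = i'
      · subst h; simp only [if_pos rfl]
        exact KM18.moment_one Q (fun b => g b * g b) hQ1 i
      · rw [if_neg h, KM18.moment_two Q g hQ1 h, hg, mul_zero]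
    rw [Finset.sum_congr rfl (fun i' _ => hterm i')]
    simp
  rw [Finset.sum_congr rfl (fun i _ => this i)]
  simp [mul_comm]

lemma KM18.cheb {n : ℕ} (Q g : B → ℝ) (hQ0 : ∀ b, 0 ≤ Q b) (hQ1 : ∑ b, Q b = 1)
    (hg : ∑ b, Q b * g b = 0) {t : ℝ} (ht : 0 < t) :
    ∑ z ∈ Finset.univ.filter (fun z : Fin n → B => t ≤ |∑ j, g (z j)|), (∏ j, Q (z j))
      ≤ (n * ∑ b, Q b * (g b * g b)) / t ^ 2 := by
  have hPn : ∀ z : Fin n → B, 0 ≤ ∏ j, Q (z j) := fun z =>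
    Finset.prod_nonneg (fun j _ => hQ0 _)
  have step1 : ∑ z ∈ Finset.univ.filter (fun z : Fin n → B => t ≤ |∑ j, g (z j)|),
      (∏ j, Q (z j))
      ≤ ∑ z ∈ Finset.univ.filter (fun z : Fin n → B => t ≤ |∑ j, g (z j)|),
        (∏ j, Q (z j)) * ((∑ j, g (z j)) ^ 2 / t ^ 2) := by
    refine Finset.sum_le_sum (fun z hz => ?_)
    rw [Finset.mem_filter] at hz
    have h1 : (1 : ℝ) ≤ (∑ j, g (z j)) ^ 2 / t ^ 2 := by
      rw [le_div_iff₀ (by positivity), one_mul]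
      calc t ^ 2 ≤ |∑ j, g (z j)| ^ 2 := pow_le_pow_left₀ ht.le hz.2 2
        _ = (∑ j, g (z j)) ^ 2 := sq_abs _
    nlinarith [hPn z]
  have step2 : ∑ z ∈ Finset.univ.filter (fun z : Fin n → B => t ≤ |∑ j, g (z j)|),
        (∏ j, Q (z j)) * ((∑ j, g (z j)) ^ 2 / t ^ 2)
      ≤ ∑ z : Fin n → B, (∏ j, Q (z j)) * ((∑ j, g (z j)) ^ 2 / t ^ 2) := by
    refine Finset.sum_le_sum_of_subset_of_nonneg (Finset.filter_subset _ _)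
      (fun z _ _ => mul_nonneg (hPn z) (by positivity))
  refine step1.trans (step2.trans ?_)
  have : ∑ z : Fin n → B, (∏ j, Q (z j)) * ((∑ j, g (z j)) ^ 2 / t ^ 2)
      = (∑ z : Fin n → B, (∏ j, Q (z j)) * (∑ j, g (z j)) ^ 2) / t ^ 2 := by
    rw [Finset.sum_div]
    exact Finset.sum_congr rfl (fun z _ => by ring)
  rw [this, KM18.second_moment Q g hQ1 hg]

lemma KM18.push {A : Type*} [Fintype A] {n : ℕ} (P : A → ℝ) (s : A → B)
    (g : (Fin n → B) → ℝ) :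
    ∑ x : Fin n → A, (∏ j, P (x j)) * g (fun j => s (x j))
      = ∑ z : Fin n → B, (∏ j, (∑ a, if s a = z j then P a else 0)) * g z := by
  have expand : ∀ z : Fin n → B, (∏ j, (∑ a, if s a = z j then P a else 0))
      = ∑ x : Fin n → A, ∏ j, (if s (x j) = z j then P (x j) else 0) := by
    intro z
    exact (KM18.sum_prod_eq (fun j (a : A) => if s a = z j then P a else 0)).symm
  calc ∑ x : Fin n → A, (∏ j, P (x j)) * g (fun j => s (x j))
      = ∑ x : Fin n → A, ∑ z : Fin n → B,
          (∏ j, (if s (x j) = z j then P (x j) else 0)) * g z := by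
        refine Finset.sum_congr rfl (fun x _ => ?_)
        have key : ∀ z : Fin n → B, (∏ j, (if s (x j) = z j then P (x j) else 0))
            = if z = (fun j => s (x j)) then (∏ j, P (x j)) else 0 := by
          intro z
          by_cases hz : z = fun j => s (x j)
          · subst hz; simp
          · rw [if_neg hz]
            obtain ⟨j, hj⟩ := Function.ne_iff.mp hz
            refine Finset.prod_eq_zero (Finset.mem_univ j) ?_
            rw [if_neg (fun h => hj h.symm)]
        rw [Finset.sum_congr rfl (fun z _ => by rw [key z])]
        simp [ite_mul]
    _ = ∑ z : Fin n → B, (∏ j, (∑ a, if s a = z j then P a else 0)) * g z := by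
        rw [Finset.sum_comm]
        refine Finset.sum_congr rfl (fun z _ => ?_)
        rw [expand z, Finset.sum_mul]

lemma KM18.distOf_nonneg {Ω A : Type*} [Fintype Ω] (μ : Ω → ℝ) (hμ : ∀ ω, 0 ≤ μ ω)
    (X : Ω → A) (a : A) : 0 ≤ distOf μ X a :=
  Finset.sum_nonneg (fun ω _ => by split <;> simp [hμ ω])

lemma KM18.distOf_sum_one {Ω A : Type*} [Fintype Ω] [Fintype A] (μ : Ω → ℝ)
    (hμ : ∑ ω, μ ω = 1) (X : Ω → A) : ∑ a, distOf μ X a = 1 := by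
  unfold distOf
  rw [Finset.sum_comm]
  simpa using hμ

lemma KM18.ent_nonneg {A : Type*} [Fintype A] (Q : A → ℝ) (h0 : ∀ a, 0 ≤ Q a)
    (h1 : ∑ a, Q a = 1) : 0 ≤ ent Q := by
  unfold ent
  rw [neg_nonneg]
  refine Finset.sum_nonpos (fun a _ => ?_)
  have hle : Q a ≤ 1 := by
    calc Q a ≤ ∑ b, Q b := Finset.single_le_sum (fun b _ => h0 b) (Finset.mem_univ a)
      _ = 1 := h1
  exact mul_nonpos_of_nonneg_of_nonpos (h0 a) (Real.logb_nonpos one_lt_two (h0 a) hle)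

lemma KM18.count_ker {k n : ℕ} (v : Fin n → ZMod 2) (hv : v ≠ 0) :
    (Finset.univ.filter (fun A : Matrix (Fin k) (Fin n) (ZMod 2) => A.mulVec v = 0)).card
      * 2 ^ k = Fintype.card (Matrix (Fin k) (Fin n) (ZMod 2)) := by
  set φ : Matrix (Fin k) (Fin n) (ZMod 2) →+ (Fin k → ZMod 2) :=
    { toFun := fun A => A.mulVec v
      map_zero' := by simp
      map_add' := fun A B => Matrix.add_mulVec A B v } with hφ
  have hsurj : Function.Surjective φ := by
    obtain ⟨j, hj⟩ : ∃ j, v j ≠ 0 := by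
      by_contra h
      push_neg at h
      exact hv (funext h)
    have hv1 : v j = 1 := by
      revert hj; generalize v j = a; revert a; decide
    intro w
    refine ⟨Matrix.of (fun i j' => if j' = j then w i else 0), ?_⟩
    funext i
    show (Matrix.of (fun i j' => if j' = j then w i else 0)).mulVec v i = w i
    simp [Matrix.mulVec, dotProduct, ite_mul, hv1]
  have hcard := AddSubgroup.card_eq_card_quotient_mul_card_addSubgroup φ.ker
  have hquot : Nat.card (Matrix (Fin k) (Fin n) (ZMod 2) ⧸ φ.ker)
      = Nat.card (Fin k → ZMod 2) :=
    Nat.card_congr (QuotientAddGroup.quotientKerEquivOfSurjective φ hsurj).toEquiv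
  have hker : Nat.card φ.ker
      = (Finset.univ.filter
          (fun A : Matrix (Fin k) (Fin n) (ZMod 2) => A.mulVec v = 0)).card := by
    rw [Nat.card_eq_fintype_card]
    rw [← Fintype.card_subtype]
    exact Fintype.card_congr (Equiv.subtypeEquivRight (fun A => by
      simp [AddMonoidHom.mem_ker, hφ]))
  rw [hquot, hker] at hcard
  rw [← Nat.card_eq_fintype_card, hcard]
  have : Nat.card (Fin k → ZMod 2) = 2 ^ k := by simp [Nat.card_eq_fintype_card]
  rw [this]; ring

lemma KM18.exists_code {k n : ℕ} (Pn : (Fin n → ZMod 2) → ℝ) (hPn : ∀ z, 0 ≤ Pn z)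
    (hPn1 : ∑ z, Pn z = 1) (T : Finset (Fin n → ZMod 2)) :
    ∃ (A : Matrix (Fin k) (Fin n) (ZMod 2)) (ψ : (Fin k → ZMod 2) → (Fin n → ZMod 2)),
      1 - ((∑ z ∈ Tᶜ, Pn z) + (T.card : ℝ) / 2 ^ k)
        ≤ ∑ z, Pn z * (if ψ (A.mulVec z) = z then (1:ℝ) else 0) := by
  classical
  set M := Fintype.card (Matrix (Fin k) (Fin n) (ZMod 2)) with hM
  have hMpos : 0 < M := Fintype.card_pos
  have hcount : ∀ z : Fin n → ZMod 2,
      ∑ A : Matrix (Fin k) (Fin n) (ZMod 2),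
        (if ∃ z' ∈ T, z' ≠ z ∧ A.mulVec z' = A.mulVec z then (1:ℝ) else 0)
      ≤ (T.card : ℝ) * ((M : ℝ) / 2 ^ k) := by
    intro z
    rw [Finset.sum_boole]
    have hsub : Finset.univ.filter
        (fun A : Matrix (Fin k) (Fin n) (ZMod 2) =>
          ∃ z' ∈ T, z' ≠ z ∧ A.mulVec z' = A.mulVec z) ⊆
        (T.erase z).biUnion (fun z' => Finset.univ.filter
          (fun A : Matrix (Fin k) (Fin n) (ZMod 2) => A.mulVec (z' - z) = 0)) := by
      intro A hA
      rw [Finset.mem_filter] at hA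
      obtain ⟨z', hz'T, hne, heq⟩ := hA.2
      refine Finset.mem_biUnion.mpr ⟨z', Finset.mem_erase.mpr ⟨hne, hz'T⟩, ?_⟩
      rw [Finset.mem_filter]
      refine ⟨Finset.mem_univ _, ?_⟩
      rw [Matrix.mulVec_sub, heq, sub_self]
    have hcard : ∀ z' ∈ T.erase z,
        ((Finset.univ.filter (fun A : Matrix (Fin k) (Fin n) (ZMod 2) =>
          A.mulVec (z' - z) = 0)).card : ℝ) = (M : ℝ) / 2 ^ k := by
      intro z' hz'
      have hne : z' - z ≠ 0 :=
        sub_ne_zero_of_ne (Finset.mem_erase.mp hz').1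
      have hck := KM18.count_ker (k := k) (z' - z) hne
      have hck' : ((Finset.univ.filter (fun A : Matrix (Fin k) (Fin n) (ZMod 2) =>
          A.mulVec (z' - z) = 0)).card : ℝ) * 2 ^ k = (M : ℝ) := by
        exact_mod_cast congrArg (Nat.cast : ℕ → ℝ) hck
      rw [eq_div_iff (by positivity : ((2:ℝ) ^ k) ≠ 0)]
      exact hck'
    calc ((Finset.univ.filter
        (fun A : Matrix (Fin k) (Fin n) (ZMod 2) =>
          ∃ z' ∈ T, z' ≠ z ∧ A.mulVec z' = A.mulVec z)).card : ℝ)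
        ≤ (((T.erase z).biUnion (fun z' => Finset.univ.filter
          (fun A : Matrix (Fin k) (Fin n) (ZMod 2) => A.mulVec (z' - z) = 0))).card : ℝ) := by
          exact_mod_cast Nat.cast_le.mpr (Finset.card_le_card hsub)
      _ ≤ ∑ z' ∈ T.erase z, ((Finset.univ.filter
          (fun A : Matrix (Fin k) (Fin n) (ZMod 2) => A.mulVec (z' - z) = 0)).card : ℝ) := by
          exact_mod_cast Nat.cast_le.mpr (Finset.card_biUnion_le)
      _ = ∑ z' ∈ T.erase z, (M : ℝ) / 2 ^ k :=
          Finset.sum_congr rfl hcard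
      _ = ((T.erase z).card : ℝ) * ((M : ℝ) / 2 ^ k) := by
          rw [Finset.sum_const, nsmul_eq_mul]
      _ ≤ (T.card : ℝ) * ((M : ℝ) / 2 ^ k) := by
          have h1 : ((T.erase z).card : ℝ) ≤ (T.card : ℝ) :=
            Nat.cast_le.mpr (Finset.card_le_card (Finset.erase_subset _ _))
          have h2 : (0:ℝ) ≤ (M : ℝ) / 2 ^ k := by positivity
          exact mul_le_mul_of_nonneg_right h1 h2
  have hTsum : ∑ z ∈ T, Pn z ≤ 1 := by
    rw [← hPn1]
    exact Finset.sum_le_sum_of_subset_of_nonneg (Finset.subset_univ T)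
      (fun z _ _ => hPn z)
  have havg : ∑ A : Matrix (Fin k) (Fin n) (ZMod 2),
      (∑ z ∈ T, Pn z * (if ∃ z' ∈ T, z' ≠ z ∧ A.mulVec z' = A.mulVec z then (1:ℝ) else 0))
      ≤ ∑ _A : Matrix (Fin k) (Fin n) (ZMod 2), (T.card : ℝ) / 2 ^ k := by
    rw [Finset.sum_comm]
    have hRHS : ∑ _A : Matrix (Fin k) (Fin n) (ZMod 2), (T.card : ℝ) / 2 ^ k
        = (M : ℝ) * ((T.card : ℝ) / 2 ^ k) := by
      rw [Finset.sum_const, nsmul_eq_mul, Finset.card_univ]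
    rw [hRHS]
    calc ∑ z ∈ T, ∑ A : Matrix (Fin k) (Fin n) (ZMod 2),
          Pn z * (if ∃ z' ∈ T, z' ≠ z ∧ A.mulVec z' = A.mulVec z then (1:ℝ) else 0)
        = ∑ z ∈ T, Pn z * ∑ A : Matrix (Fin k) (Fin n) (ZMod 2),
            (if ∃ z' ∈ T, z' ≠ z ∧ A.mulVec z' = A.mulVec z then (1:ℝ) else 0) := by
          exact Finset.sum_congr rfl (fun z _ => (Finset.mul_sum _ _ _).symm)
      _ ≤ ∑ z ∈ T, Pn z * ((T.card : ℝ) * ((M : ℝ) / 2 ^ k)) := by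
          exact Finset.sum_le_sum (fun z _ =>
            mul_le_mul_of_nonneg_left (hcount z) (hPn z))
      _ = (∑ z ∈ T, Pn z) * ((T.card : ℝ) * ((M : ℝ) / 2 ^ k)) :=
          (Finset.sum_mul _ _ _).symm
      _ ≤ 1 * ((T.card : ℝ) * ((M : ℝ) / 2 ^ k)) := by
          have h2 : (0:ℝ) ≤ (T.card : ℝ) * ((M : ℝ) / 2 ^ k) := by positivity
          exact mul_le_mul_of_nonneg_right hTsum h2
      _ = (M : ℝ) * ((T.card : ℝ) / 2 ^ k) := by ring
  obtain ⟨A, -, hA⟩ := Finset.exists_le_of_sum_le Finset.univ_nonempty havg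
  refine ⟨A, fun s => if h : ∃ z ∈ T, A.mulVec z = s then h.choose else 0, ?_⟩
  set ψ : (Fin k → ZMod 2) → (Fin n → ZMod 2) :=
    fun s => if h : ∃ z ∈ T, A.mulVec z = s then h.choose else 0 with hψdef
  have hψ : ∀ z ∈ T, ¬ (∃ z' ∈ T, z' ≠ z ∧ A.mulVec z' = A.mulVec z) →
      ψ (A.mulVec z) = z := by
    intro z hz hbad
    have hex : ∃ z' ∈ T, A.mulVec z' = A.mulVec z := ⟨z, hz, rfl⟩
    rw [hψdef]
    simp only
    rw [dif_pos hex]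
    by_contra hne
    exact hbad ⟨hex.choose, hex.choose_spec.1, hne, hex.choose_spec.2⟩
  have hsum : (∑ z, Pn z * (if ψ (A.mulVec z) = z then (1:ℝ) else 0))
      + (∑ z, Pn z * (if ψ (A.mulVec z) = z then (0:ℝ) else 1)) = 1 := by
    rw [← Finset.sum_add_distrib]
    have h1 : ∑ z, (Pn z * (if ψ (A.mulVec z) = z then (1:ℝ) else 0)
        + Pn z * (if ψ (A.mulVec z) = z then (0:ℝ) else 1)) = ∑ z, Pn z :=
      Finset.sum_congr rfl (fun z _ => by split <;> ring)
    rw [h1, hPn1]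
  have hfail : ∑ z, Pn z * (if ψ (A.mulVec z) = z then (0:ℝ) else 1)
      ≤ (T.card : ℝ) / 2 ^ k + ∑ z ∈ Tᶜ, Pn z := by
    rw [← Finset.sum_add_sum_compl T]
    refine add_le_add ?_ ?_
    · refine le_trans (Finset.sum_le_sum (fun z hz => ?_)) hA
      by_cases hbad : ∃ z' ∈ T, z' ≠ z ∧ A.mulVec z' = A.mulVec z
      · rw [if_pos hbad]
        have : (if ψ (A.mulVec z) = z then (0:ℝ) else 1) ≤ 1 := by split <;> norm_num
        calc Pn z * (if ψ (A.mulVec z) = z then (0:ℝ) else 1) ≤ Pn z * 1 :=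
            mul_le_mul_of_nonneg_left this (hPn z)
          _ = Pn z * 1 := rfl
      · rw [if_neg hbad, if_pos (hψ z hz hbad)]
    · refine Finset.sum_le_sum (fun z _ => ?_)
      have : (if ψ (A.mulVec z) = z then (0:ℝ) else 1) ≤ 1 := by split <;> norm_num
      calc Pn z * (if ψ (A.mulVec z) = z then (0:ℝ) else 1) ≤ Pn z * 1 :=
          mul_le_mul_of_nonneg_left this (hPn z)
        _ = Pn z := mul_one _
  linarith

theorem stmt18
    (PXY : ZMod 2 × ZMod 2 → ℝ) (h0 : ∀ xy, 0 ≤ PXY xy) (h1 : ∑ xy, PXY xy = 1) :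
    ∀ R : ℝ, Hent PXY (fun xy => xy.1 + xy.2) < R →
    ∀ η > (0 : ℝ), ∃ N : ℕ, ∀ n ≥ N,
      ∃ k : ℕ, 1 ≤ k ∧ (k : ℝ) / (n : ℝ) ≤ R ∧
        ∃ (A : Matrix (Fin k) (Fin n) (ZMod 2))
          (ψ : (Fin k → ZMod 2) → (Fin n → ZMod 2)),
          (1 : ℝ) - η ≤
            ∑ xy : Fin n → ZMod 2 × ZMod 2,
              (∏ j, PXY (xy j)) *
                (if ψ (A.mulVec (fun j => (xy j).1) + A.mulVec (fun j => (xy j).2))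
                    = (fun j => (xy j).1 + (xy j).2) then (1 : ℝ) else 0) := by
  intro R hR η hη
  classical
  set s : ZMod 2 × ZMod 2 → ZMod 2 := fun xy => xy.1 + xy.2 with hs
  set Q : ZMod 2 → ℝ := distOf PXY s with hQ
  have hQ0 : ∀ b, 0 ≤ Q b := KM18.distOf_nonneg PXY h0 s
  have hQ1 : ∑ b, Q b = 1 := KM18.distOf_sum_one PXY h1 s
  set H : ℝ := ent Q with hHdef
  have hH0 : 0 ≤ H := KM18.ent_nonneg Q hQ0 hQ1
  have hHR : H < R := hR
  set δ : ℝ := (R - H) / 3 with hδdef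
  have hδpos : 0 < δ := by simp only [hδdef]; linarith
  set g : ZMod 2 → ℝ := fun b => Real.logb 2 (Q b) + H with hg
  have hEg : ∑ b, Q b * g b = 0 := by
    have e1 : ∑ b, Q b * g b
        = (∑ b, Q b * Real.logb 2 (Q b)) + H * ∑ b, Q b := by
      rw [Finset.mul_sum]
      rw [← Finset.sum_add_distrib]
      exact Finset.sum_congr rfl (fun b _ => by simp [hg]; ring)
    rw [e1, hQ1, mul_one]
    have : H = -∑ b, Q b * Real.logb 2 (Q b) := rfl
    linarith
  set V : ℝ := ∑ b, Q b * (g b * g b) with hV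
  have hV0 : 0 ≤ V :=
    Finset.sum_nonneg (fun b _ => mul_nonneg (hQ0 b) (mul_self_nonneg _))
  -- choose N
  set N₀ : ℝ := max ((2 * V) / (η * δ ^ 2) + 1) ((max 1 (-Real.logb 2 (η / 2))) / δ) with hN₀
  refine ⟨⌈N₀⌉₊ + 1, fun n hn => ?_⟩
  have hn1 : 1 ≤ n := le_trans (Nat.le_add_left 1 ⌈N₀⌉₊) hn
  have hnpos : (0:ℝ) < n := by exact_mod_cast hn1
  have hnN₀ : N₀ ≤ (n:ℝ) := by
    calc N₀ ≤ (⌈N₀⌉₊ : ℝ) := Nat.le_ceil N₀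
      _ ≤ (n : ℝ) := by exact_mod_cast le_trans (Nat.le_succ _) hn
  have hn3 : 2 * V ≤ (n:ℝ) * (η * δ ^ 2) := by
    have h' : (2 * V) / (η * δ ^ 2) + 1 ≤ (n:ℝ) := le_trans (le_max_left _ _) hnN₀
    have hpos : 0 < η * δ ^ 2 := by positivity
    rw [div_add' _ _ _ (ne_of_gt hpos)] at h'
    rw [div_le_iff₀ hpos] at h'
    nlinarith
  have hn4 : max 1 (-Real.logb 2 (η / 2)) ≤ (n:ℝ) * δ := by
    have h' : (max 1 (-Real.logb 2 (η / 2))) / δ ≤ (n:ℝ) := le_trans (le_max_right _ _) hnN₀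
    rw [div_le_iff₀ hδpos] at h'
    linarith
  have hnδ1 : 1 ≤ (n:ℝ) * δ := le_trans (le_max_left _ _) hn4
  -- choose k
  set k : ℕ := ⌈(n:ℝ) * (H + 2 * δ)⌉₊ with hk
  have hk1 : 1 ≤ k := by
    rw [hk]
    refine Nat.one_le_iff_ne_zero.mpr (Nat.ceil_pos.mp ?_).ne'
    positivity
  have hkub : (k:ℝ) ≤ (n:ℝ) * R := by
    have h' : (k:ℝ) < (n:ℝ) * (H + 2 * δ) + 1 :=
      Nat.ceil_lt_add_one (by positivity)
    have hReq : R = H + 3 * δ := by rw [hδdef]; ring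
    calc (k:ℝ) ≤ (n:ℝ) * (H + 2 * δ) + 1 := h'.le
      _ ≤ (n:ℝ) * (H + 2 * δ) + (n:ℝ) * δ := by linarith
      _ = (n:ℝ) * (H + 3 * δ) := by ring
      _ = (n:ℝ) * R := by rw [hReq]
  have hklb : (n:ℝ) * (H + 2 * δ) ≤ (k:ℝ) := Nat.le_ceil _
  refine ⟨k, hk1, by rw [div_le_iff₀ hnpos]; linarith [hkub], ?_⟩
  -- typical set
  set Pn : (Fin n → ZMod 2) → ℝ := fun z => ∏ j, Q (z j) with hPn
  have hPn0 : ∀ z, 0 ≤ Pn z := fun z => Finset.prod_nonneg (fun j _ => hQ0 _)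
  have hPn1 : ∑ z, Pn z = 1 := by
    rw [hPn]
    rw [KM18.sum_prod_eq (fun _ b => Q b)]
    simp [hQ1]
  set c : ℝ := H + δ with hc
  set T : Finset (Fin n → ZMod 2) :=
    Finset.univ.filter (fun z => (2:ℝ) ^ (-((n:ℝ) * c)) ≤ Pn z) with hT
  -- card bound
  have hTcard : (T.card : ℝ) ≤ (2:ℝ) ^ ((n:ℝ) * c) := by
    have h2 : (T.card : ℝ) * (2:ℝ) ^ (-((n:ℝ) * c)) ≤ 1 := by
      calc (T.card : ℝ) * (2:ℝ) ^ (-((n:ℝ) * c))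
          = ∑ _z ∈ T, (2:ℝ) ^ (-((n:ℝ) * c)) := by
            rw [Finset.sum_const, nsmul_eq_mul]
        _ ≤ ∑ z ∈ T, Pn z := Finset.sum_le_sum (fun z hz => (Finset.mem_filter.mp hz).2)
        _ ≤ ∑ z, Pn z := Finset.sum_le_sum_of_subset_of_nonneg (Finset.subset_univ T)
            (fun z _ _ => hPn0 z)
        _ = 1 := hPn1
    have hpos : (0:ℝ) < (2:ℝ) ^ (-((n:ℝ) * c)) := Real.rpow_pos_of_pos two_pos _
    rw [← mul_le_mul_iff_left₀ hpos]
    calc (T.card : ℝ) * (2:ℝ) ^ (-((n:ℝ) * c)) ≤ 1 := h2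
      _ = (2:ℝ) ^ ((n:ℝ) * c) * (2:ℝ) ^ (-((n:ℝ) * c)) := by
          rw [← Real.rpow_add two_pos]; simp
  -- probability of atypical set
  have hTc : ∑ z ∈ Tᶜ, Pn z ≤ η / 2 := by
    have hsubset : Tᶜ.filter (fun z => Pn z ≠ 0) ⊆
        Finset.univ.filter (fun z : Fin n → ZMod 2 => (n:ℝ) * δ ≤ |∑ j, g (z j)|) := by
      intro z hz
      rw [Finset.mem_filter] at hz ⊢
      refine ⟨Finset.mem_univ _, ?_⟩
      obtain ⟨hzc, hzne⟩ := hz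
      rw [Finset.mem_compl, hT, Finset.mem_filter] at hzc
      have hlt : Pn z < (2:ℝ) ^ (-((n:ℝ) * c)) := by
        by_contra hcon
        exact hzc ⟨Finset.mem_univ _, not_lt.mp hcon⟩
      have hPnpos : 0 < Pn z := lt_of_le_of_ne (hPn0 z) (Ne.symm hzne)
      have hfacne : ∀ j ∈ Finset.univ, Q (z j) ≠ 0 := by
        rw [hPn] at hzne
        exact fun j _ => Finset.prod_ne_zero_iff.mp hzne j (Finset.mem_univ j)
      have hlog : Real.logb 2 (Pn z) = ∑ j, Real.logb 2 (Q (z j)) := by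
        rw [hPn]
        simp only [Real.logb]
        rw [Real.log_prod hfacne, Finset.sum_div]
      have hlt2 : Real.logb 2 (Pn z) < -((n:ℝ) * c) := by
        calc Real.logb 2 (Pn z) < Real.logb 2 ((2:ℝ) ^ (-((n:ℝ) * c))) :=
            Real.logb_lt_logb one_lt_two hPnpos hlt
          _ = -((n:ℝ) * c) := Real.logb_rpow (by norm_num) (by norm_num)
      have hsg : ∑ j, g (z j) = Real.logb 2 (Pn z) + (n:ℝ) * H := by
        simp only [hg]
        rw [Finset.sum_add_distrib, hlog, Finset.sum_const, Finset.card_univ,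
          Fintype.card_fin, nsmul_eq_mul]
      have hsglt : ∑ j, g (z j) < -((n:ℝ) * δ) := by
        rw [hsg]
        have : (n:ℝ) * c = (n:ℝ) * H + (n:ℝ) * δ := by rw [hc]; ring
        linarith
      calc (n:ℝ) * δ ≤ -(∑ j, g (z j)) := by linarith
        _ ≤ |∑ j, g (z j)| := neg_le_abs _
    have hzero : ∑ z ∈ Tᶜ, Pn z = ∑ z ∈ Tᶜ.filter (fun z => Pn z ≠ 0), Pn z := by
      rw [Finset.sum_filter_ne_zero]
    rw [hzero]
    have hstep : ∑ z ∈ Tᶜ.filter (fun z => Pn z ≠ 0), Pn z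
        ≤ ∑ z ∈ Finset.univ.filter
            (fun z : Fin n → ZMod 2 => (n:ℝ) * δ ≤ |∑ j, g (z j)|), Pn z :=
      Finset.sum_le_sum_of_subset_of_nonneg hsubset (fun z _ _ => hPn0 z)
    have hKM18.cheb := KM18.cheb (n := n) Q g hQ0 hQ1 hEg (t := (n:ℝ) * δ) (by positivity)
    refine hstep.trans (hKM18.cheb.trans ?_)
    rw [div_le_iff₀ (by positivity)]
    calc (n:ℝ) * V ≤ (n:ℝ) * ((n:ℝ) * (η * δ ^ 2)) / 2 := by nlinarith
      _ = η / 2 * ((n:ℝ) * δ) ^ 2 := by ring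
  -- card/2^k bound
  have hT2k : (T.card : ℝ) / 2 ^ k ≤ η / 2 := by
    have h2k : (2:ℝ) ^ ((n:ℝ) * (H + 2 * δ)) ≤ (2:ℝ) ^ (k:ℕ) := by
      rw [← Real.rpow_natCast 2 k]
      exact Real.rpow_le_rpow_of_exponent_le one_le_two hklb
    have h2kpos : (0:ℝ) < (2:ℝ) ^ (k:ℕ) := by positivity
    have hstep : (T.card : ℝ) / 2 ^ k ≤ (2:ℝ) ^ ((n:ℝ) * c) / (2:ℝ) ^ ((n:ℝ) * (H + 2 * δ)) := by
      refine div_le_div₀ (by positivity) hTcard (by positivity) h2k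
    refine hstep.trans ?_
    have heq : (2:ℝ) ^ ((n:ℝ) * c) / (2:ℝ) ^ ((n:ℝ) * (H + 2 * δ))
        = (2:ℝ) ^ (-((n:ℝ) * δ)) := by
      rw [← Real.rpow_sub two_pos]
      congr 1
      rw [hc]; ring
    rw [heq]
    have hexp : -((n:ℝ) * δ) ≤ Real.logb 2 (η / 2) := by
      have := le_trans (le_max_right _ _) hn4
      linarith
    calc (2:ℝ) ^ (-((n:ℝ) * δ)) ≤ (2:ℝ) ^ (Real.logb 2 (η / 2)) :=
        Real.rpow_le_rpow_of_exponent_le one_le_two hexp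
      _ = η / 2 := Real.rpow_logb two_pos (by norm_num) (by linarith)
  -- apply the coding lemma
  obtain ⟨A, ψ, hcode⟩ := KM18.exists_code (k := k) Pn hPn0 hPn1 T
  refine ⟨A, ψ, ?_⟩
  have hfinal : (1:ℝ) - η ≤ ∑ z, Pn z * (if ψ (A.mulVec z) = z then (1:ℝ) else 0) := by
    refine le_trans ?_ hcode
    have : (∑ z ∈ Tᶜ, Pn z) + (T.card : ℝ) / 2 ^ k ≤ η := by linarith
    linarith
  -- rewrite the target sum
  have hrw : ∑ xy : Fin n → ZMod 2 × ZMod 2,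
      (∏ j, PXY (xy j)) *
        (if ψ (A.mulVec (fun j => (xy j).1) + A.mulVec (fun j => (xy j).2))
            = (fun j => (xy j).1 + (xy j).2) then (1:ℝ) else 0)
      = ∑ z, Pn z * (if ψ (A.mulVec z) = z then (1:ℝ) else 0) := by
    have hmv : ∀ xy : Fin n → ZMod 2 × ZMod 2,
        A.mulVec (fun j => (xy j).1) + A.mulVec (fun j => (xy j).2)
          = A.mulVec (fun j => s (xy j)) := by
      intro xy
      rw [← Matrix.mulVec_add]
      congr 1
    have hfn : ∀ xy : Fin n → ZMod 2 × ZMod 2,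
        (fun j => (xy j).1 + (xy j).2) = fun j => s (xy j) := fun xy => rfl
    calc ∑ xy : Fin n → ZMod 2 × ZMod 2,
        (∏ j, PXY (xy j)) *
          (if ψ (A.mulVec (fun j => (xy j).1) + A.mulVec (fun j => (xy j).2))
              = (fun j => (xy j).1 + (xy j).2) then (1:ℝ) else 0)
        = ∑ xy : Fin n → ZMod 2 × ZMod 2,
          (∏ j, PXY (xy j)) *
            (if ψ (A.mulVec (fun j => s (xy j))) = (fun j => s (xy j)) then (1:ℝ) else 0) := by
          refine Finset.sum_congr rfl (fun xy _ => ?_)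
          rw [hmv xy, hfn xy]
      _ = ∑ z, Pn z * (if ψ (A.mulVec z) = z then (1:ℝ) else 0) := by
          rw [KM18.push PXY s (fun z => if ψ (A.mulVec z) = z then (1:ℝ) else 0)]
          refine Finset.sum_congr rfl fun z _ => ?_
          simp only [hPn, hQ, distOf]
  rw [hrw]
  exact hfinal

end
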